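/- For every nonzero signal f in ℂ^N, the sum of the size of the support of f and the size of the support of its discrete Fourier transform f̂ is at least 2√N. -/

import Mathlib

open scoped Classical

/-- The unitary discrete Fourier transform on `ℂ^N`. -/
noncomputable def dft (N : ℕ) [NeZero N] (f : ZMod N → ℂ) : ZMod N → ℂ :=
  fun ω => (1 / Real.sqrt N : ℂ) *
    ∑ t : ZMod N, f t *
      Complex.exp (-(2 * Real.pi * Complex.I * (ω.val : ℂ) * (t.val : ℂ)) / N)

/-- The support of a finite signal, as a finset. -/
noncomputable def dsupp (N : ℕ) [NeZero N] (f : ZMod N → ℂ) : Finset (ZMod N) :=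
  Finset.univ.filter (fun t => f t ≠ 0)

open scoped ZMod in
lemma dft_eq_smul_mathlib_dft (N : ℕ) [NeZero N] (f : ZMod N → ℂ) :
    dft N f = fun ω => (1 / Real.sqrt N : ℂ) * ZMod.dft f ω := by
  funext ω
  unfold dft
  congr 1
  rw [ZMod.dft_apply]
  apply Finset.sum_congr rfl
  intro t _
  rw [smul_eq_mul, mul_comm]
  congr 1
  have : (-(t * ω) : ZMod N) = ((-(t.val * ω.val) : ℤ) : ZMod N) := by
    push_cast
    simp [ZMod.natCast_val, ZMod.cast_id]
  rw [this, ZMod.stdAddChar_coe]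
  congr 1
  push_cast
  ring

lemma norm_stdAddChar (N : ℕ) [NeZero N] (x : ZMod N) :
    ‖ZMod.stdAddChar (N := N) x‖ = 1 := by
  rw [ZMod.stdAddChar_apply, Circle.norm_coe]

open scoped ZMod in
lemma norm_mathlib_dft_le (N : ℕ) [NeZero N] (g : ZMod N → ℂ) (C : ℝ)
    (hC : ∀ t, ‖g t‖ ≤ C) (ω : ZMod N) :
    ‖ZMod.dft g ω‖ ≤ (dsupp N g).card * C := by
  rw [ZMod.dft_apply]
  have : ∑ j : ZMod N, ZMod.stdAddChar (-(j * ω)) • g j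
      = ∑ j ∈ dsupp N g, ZMod.stdAddChar (-(j * ω)) • g j := by
    symm
    apply Finset.sum_subset (Finset.subset_univ _)
    intro x _ hx
    simp only [dsupp, Finset.mem_filter, Finset.mem_univ, true_and, not_not] at hx
    simp [hx]
  rw [this]
  calc ‖∑ j ∈ dsupp N g, ZMod.stdAddChar (-(j * ω)) • g j‖
      ≤ ∑ j ∈ dsupp N g, ‖ZMod.stdAddChar (-(j * ω)) • g j‖ := norm_sum_le _ _
    _ ≤ ∑ _j ∈ dsupp N g, C := by
        apply Finset.sum_le_sum
        intro j _
        rw [norm_smul, norm_stdAddChar, one_mul]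
        exact hC j
    _ = (dsupp N g).card * C := by rw [Finset.sum_const, nsmul_eq_mul]

open scoped ZMod in
lemma key_mul (N : ℕ) [NeZero N] (f : ZMod N → ℂ) (hf : f ≠ 0) :
    (N : ℝ) ≤ (dsupp N f).card * (dsupp N (ZMod.dft f)).card := by
  -- pick t0 maximizing ‖f t0‖
  obtain ⟨t0, -, ht0⟩ := Finset.exists_max_image Finset.univ (fun t => ‖f t‖)
    ⟨0, Finset.mem_univ 0⟩
  have hf0 : 0 < ‖f t0‖ := by
    obtain ⟨s, hs⟩ := Function.ne_iff.mp hf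
    exact lt_of_lt_of_le (norm_pos_iff.mpr hs) (ht0 s (Finset.mem_univ s))
  set T := (dsupp N f).card
  set Ω := (dsupp N (ZMod.dft f)).card
  have hbound : ∀ ω, ‖ZMod.dft f ω‖ ≤ T * ‖f t0‖ :=
    fun ω => norm_mathlib_dft_le N f (‖f t0‖) (fun t => ht0 t (Finset.mem_univ t)) ω
  have hinv : ZMod.dft (ZMod.dft f) (-t0) = (N : ℂ) • f t0 := by
    rw [ZMod.dft_dft]
    simp
  have h1 : (N : ℝ) * ‖f t0‖ ≤ Ω * (T * ‖f t0‖) := by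
    calc (N : ℝ) * ‖f t0‖ = ‖ZMod.dft (ZMod.dft f) (-t0)‖ := by
          rw [hinv, norm_smul]; simp
      _ ≤ Ω * (T * ‖f t0‖) :=
          norm_mathlib_dft_le N (ZMod.dft f) (T * ‖f t0‖) hbound (-t0)
  have := (mul_le_mul_iff_left₀ hf0).mp (by linarith [h1] : (N : ℝ) * ‖f t0‖ ≤ (T * Ω) * ‖f t0‖)
  linarith

/-- Donoho–Stark: `|supp f| + |supp f̂| ≥ 2√N` for every nonzero `f : ℂ^N`. -/
theorem stmt_0 (N : ℕ) [NeZero N] (f : ZMod N → ℂ) (hf : f ≠ 0) :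
    2 * Real.sqrt N ≤ (dsupp N f).card + (dsupp N (dft N f)).card := by
  have hsupp : dsupp N (dft N f) = dsupp N (ZMod.dft f) := by
    unfold dsupp
    apply Finset.filter_congr
    intro ω _
    rw [dft_eq_smul_mathlib_dft]
    have hN : (1 / Real.sqrt N : ℂ) ≠ 0 := by
      simp only [ne_eq, one_div, inv_eq_zero, Complex.ofReal_eq_zero]
      exact Real.sqrt_ne_zero'.mpr (by exact_mod_cast Nat.pos_of_ne_zero (NeZero.ne N))
    simp [hN, NeZero.ne N]
  rw [hsupp]
  have hmul := key_mul N f hf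
  set T := ((dsupp N f).card : ℝ)
  set Ω := ((dsupp N (ZMod.dft f)).card : ℝ)
  have hT : 0 ≤ T := Nat.cast_nonneg _
  have hΩ : 0 ≤ Ω := Nat.cast_nonneg _
  have h1 : Real.sqrt N ≤ Real.sqrt (T * Ω) := Real.sqrt_le_sqrt hmul
  have h2 : Real.sqrt (T * Ω) = Real.sqrt T * Real.sqrt Ω := Real.sqrt_mul hT Ω
  have h3 : 2 * (Real.sqrt T * Real.sqrt Ω) ≤ T + Ω := by
    nlinarith [sq_nonneg (Real.sqrt T - Real.sqrt Ω), Real.sq_sqrt hT, Real.sq_sqrt hΩ]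
  nlinarith
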